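/- Let K ≥ 1 be an integer. For each k ∈ {1,…,K}, let F_k: ℝ≥0 → ℝ≥0 be nondecreasing, and suppose there exist c_k** > 0 and p_k* > 0 such that F_k(c_k**) = c_k**/p_k* and p_k*·F_k(c) ≤ c for every c ≥ 0. Let a₁, …, a_K > 0. For C > 0, define V(C) as the infimum, over all K-tuples of finite cost lists (c_i^k ≥ 0, 1 ≤ i ≤ m_k, m_k ∈ ℕ) with total cost ∑_{k=1}^K ∑_{i=1}^{m_k} c_i^k ≤ C and with ∑_{i=1}^{m_k} F_k(c_i^k) > 0 for every k, of ∑_{k=1}^K a_k² / (∑_{i=1}^{m_k} F_k(c_i^k)). Then lim_{C→∞} C·V(C) = (∑_{k=1}^K a_k·√(p_k*))². -/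

import Mathlib

open Filter Finset

/-- Main theorem on optimal sensing from `K` independent heterogeneous data sources:
the smallest achievable Cramér–Rao bound `V C` under total budget `C` satisfies
`C · V C → (∑ a k √(pstar k))²` as `C → ∞`. -/
theorem clean_sensing_main (K : ℕ) (hK : 1 ≤ K)
    (F : Fin K → ℝ → ℝ)
    (hF0 : ∀ k c, 0 ≤ c → 0 ≤ F k c)
    (hFmono : ∀ k, MonotoneOn (F k) (Set.Ici (0:ℝ)))
    (cstar pstar : Fin K → ℝ)
    (hcstar : ∀ k, 0 < cstar k) (hpstar : ∀ k, 0 < pstar k)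
    (hFeq : ∀ k, F k (cstar k) = cstar k / pstar k)
    (hFle : ∀ k c, 0 ≤ c → pstar k * F k c ≤ c)
    (a : Fin K → ℝ) (ha : ∀ k, 0 < a k)
    (V : ℝ → ℝ)
    (hV : ∀ C : ℝ, V C = sInf {y : ℝ |
      ∃ (m : Fin K → ℕ) (c : (k : Fin K) → Fin (m k) → ℝ),
        (∀ k i, 0 ≤ c k i) ∧ (∑ k, ∑ i, c k i) ≤ C ∧
        (∀ k, 0 < ∑ i, F k (c k i)) ∧
        y = ∑ k, (a k)^2 / (∑ i, F k (c k i))}) :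
    Filter.Tendsto (fun C : ℝ => C * V C) Filter.atTop
      (nhds ((∑ k, a k * Real.sqrt (pstar k))^2)) := by
  classical
  have hKne : Nonempty (Fin K) := ⟨⟨0, hK⟩⟩
  set S := ∑ k, a k * Real.sqrt (pstar k) with hSdef
  have hs : ∀ k, 0 < Real.sqrt (pstar k) := fun k => Real.sqrt_pos.2 (hpstar k)
  have hS : 0 < S := Finset.sum_pos (fun k _ => mul_pos (ha k) (hs k)) Finset.univ_nonempty
  set x : Fin K → ℝ := fun k => a k * Real.sqrt (pstar k) / (S * cstar k) with hxdef
  have hx : ∀ k, 0 < x k := fun k =>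
    div_pos (mul_pos (ha k) (hs k)) (mul_pos hS (hcstar k))
  have hxc : ∀ k, x k * cstar k = a k * Real.sqrt (pstar k) / S := by
    intro k
    simp only [hxdef]
    field_simp [hS.ne', (hcstar k).ne']
  have hxcsum : ∑ k, x k * cstar k = 1 := by
    rw [Finset.sum_congr rfl (fun k _ => hxc k), ← Finset.sum_div, ← hSdef,
      div_self hS.ne']
  -- the lower bound, by Cauchy–Schwarz
  have hlow : ∀ C : ℝ, 0 < C → ∀ (m : Fin K → ℕ) (c : (k : Fin K) → Fin (m k) → ℝ),
      (∀ k i, 0 ≤ c k i) → (∑ k, ∑ i, c k i) ≤ C →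
      (∀ k, 0 < ∑ i, F k (c k i)) →
      S^2 ≤ C * ∑ k, (a k)^2 / (∑ i, F k (c k i)) := by
    intro C hC m c hc0 hcost hpos
    set G : Fin K → ℝ := fun k => ∑ i, F k (c k i) with hGdef
    have hG : ∀ k, 0 < G k := hpos
    have hpG : ∑ k, pstar k * G k ≤ C := by
      refine le_trans (Finset.sum_le_sum fun k _ => ?_) hcost
      simp only [hGdef, Finset.mul_sum]
      exact Finset.sum_le_sum fun i _ => hFle k (c k i) (hc0 k i)
    have hCS := Finset.sum_mul_sq_le_sq_mul_sq Finset.univ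
      (fun k => a k / Real.sqrt (G k)) (fun k => Real.sqrt (pstar k * G k))
    have h1 : ∀ k, a k / Real.sqrt (G k) * Real.sqrt (pstar k * G k)
        = a k * Real.sqrt (pstar k) := by
      intro k
      rw [Real.sqrt_mul (hpstar k).le]
      have hGk : Real.sqrt (G k) ≠ 0 := (Real.sqrt_pos.2 (hG k)).ne'
      field_simp
    have h2 : ∀ k, (a k / Real.sqrt (G k))^2 = (a k)^2 / G k := by
      intro k
      rw [div_pow, Real.sq_sqrt (hG k).le]
    have h3 : ∀ k, (Real.sqrt (pstar k * G k))^2 = pstar k * G k := by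
      intro k
      exact Real.sq_sqrt (mul_nonneg (hpstar k).le (hG k).le)
    rw [Finset.sum_congr rfl (fun k _ => h1 k), Finset.sum_congr rfl (fun k _ => h2 k),
      Finset.sum_congr rfl (fun k _ => h3 k)] at hCS
    have hynn : 0 ≤ ∑ k, (a k)^2 / G k :=
      Finset.sum_nonneg fun k _ => div_nonneg (sq_nonneg _) (hG k).le
    calc S^2 ≤ (∑ k, (a k)^2 / G k) * ∑ k, pstar k * G k := hCS
      _ ≤ (∑ k, (a k)^2 / G k) * C := mul_le_mul_of_nonneg_left hpG hynn
      _ = C * ∑ k, (a k)^2 / G k := mul_comm _ _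
  -- helper sums for the constant-cost allocation
  have hsumF : ∀ (k : Fin K) (n : ℕ),
      (∑ _i : Fin n, F k (cstar k)) = n * (cstar k / pstar k) := by
    intro k n
    rw [Finset.sum_const, Finset.card_univ, Fintype.card_fin, nsmul_eq_mul, hFeq]
  have hsumc : ∀ (k : Fin K) (n : ℕ), (∑ _i : Fin n, cstar k) = n * cstar k := by
    intro k n
    rw [Finset.sum_const, Finset.card_univ, Fintype.card_fin, nsmul_eq_mul]
  -- membership of the candidate allocation
  have hmem : ∀ C : ℝ, 0 < C → (∀ k, 1 ≤ x k * C) →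
      (∑ k, (a k)^2 / ((⌊x k * C⌋₊ : ℝ) * (cstar k / pstar k))) ∈ {y : ℝ |
      ∃ (m : Fin K → ℕ) (c : (k : Fin K) → Fin (m k) → ℝ),
        (∀ k i, 0 ≤ c k i) ∧ (∑ k, ∑ i, c k i) ≤ C ∧
        (∀ k, 0 < ∑ i, F k (c k i)) ∧
        y = ∑ k, (a k)^2 / (∑ i, F k (c k i))} := by
    intro C hC hC1
    have hm1 : ∀ k, 1 ≤ ⌊x k * C⌋₊ := by
      intro k
      exact Nat.le_floor (by exact_mod_cast hC1 k)
    have hm1' : ∀ k, (0:ℝ) < (⌊x k * C⌋₊ : ℝ) := by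
      intro k
      exact_mod_cast hm1 k
    refine ⟨fun k => ⌊x k * C⌋₊, fun k _ => cstar k, fun k i => (hcstar k).le, ?_, ?_, ?_⟩
    · calc ∑ k, ∑ _i : Fin ⌊x k * C⌋₊, cstar k
          = ∑ k, (⌊x k * C⌋₊ : ℝ) * cstar k := Finset.sum_congr rfl fun k _ => hsumc k _
        _ ≤ ∑ k, (x k * C) * cstar k := by
            refine Finset.sum_le_sum fun k _ => ?_
            exact mul_le_mul_of_nonneg_right
              (Nat.floor_le (mul_nonneg (hx k).le hC.le)) (hcstar k).le
        _ = C * ∑ k, x k * cstar k := by rw [Finset.mul_sum]; exact Finset.sum_congr rfl fun k _ => by ring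
        _ = C := by rw [hxcsum, mul_one]
    · intro k
      rw [hsumF k _]
      exact mul_pos (hm1' k) (div_pos (hcstar k) (hpstar k))
    · exact Finset.sum_congr rfl fun k _ => by rw [hsumF k _]
  -- the upper-bound function and its limit
  set g : ℝ → ℝ := fun C => ∑ k, (a k)^2 * pstar k / (cstar k * ((⌊x k * C⌋₊ : ℝ) / C))
    with hgdef
  have hgC : ∀ C : ℝ, 0 < C → (∀ k, 1 ≤ x k * C) →
      C * (∑ k, (a k)^2 / ((⌊x k * C⌋₊ : ℝ) * (cstar k / pstar k))) = g C := by
    intro C hC hC1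
    have hm1' : ∀ k, (0:ℝ) < (⌊x k * C⌋₊ : ℝ) := by
      intro k
      exact_mod_cast Nat.le_floor (α := ℝ) (by exact_mod_cast hC1 k)
    simp only [hgdef, Finset.mul_sum]
    refine Finset.sum_congr rfl fun k _ => ?_
    field_simp
  have hgt : Filter.Tendsto g atTop (nhds (S^2)) := by
    have hterm : ∀ k : Fin K, Filter.Tendsto
        (fun C : ℝ => (a k)^2 * pstar k / (cstar k * ((⌊x k * C⌋₊ : ℝ) / C))) atTop
        (nhds (a k * Real.sqrt (pstar k) * S)) := by
      intro k
      have hfl : Filter.Tendsto (fun C : ℝ => (⌊x k * C⌋₊ : ℝ) / C) atTop (nhds (x k)) :=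
        tendsto_nat_floor_mul_div_atTop (hx k).le
      have hden : Filter.Tendsto (fun C : ℝ => cstar k * ((⌊x k * C⌋₊ : ℝ) / C)) atTop
          (nhds (cstar k * x k)) := hfl.const_mul _
      have hne : cstar k * x k ≠ 0 := (mul_pos (hcstar k) (hx k)).ne'
      have := Filter.Tendsto.div (tendsto_const_nhds
        (x := (a k)^2 * pstar k) (f := atTop)) hden hne
      convert this using 2
      · rfl
      have hsq : Real.sqrt (pstar k) * Real.sqrt (pstar k) = pstar k :=
        Real.mul_self_sqrt (hpstar k).le
      rw [mul_comm (cstar k) (x k), hxc k,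
        eq_div_iff (ne_of_gt (div_pos (mul_pos (ha k) (hs k)) hS))]
      field_simp [hS.ne']
      linear_combination (a k)^2 * hsq
    have := tendsto_finset_sum Finset.univ (fun k _ => hterm k)
    have heq : (∑ k, a k * Real.sqrt (pstar k) * S) = S^2 := by
      rw [← Finset.sum_mul, ← hSdef, sq]
    rw [heq] at this
    exact this
  -- eventual bounds
  have hev1 : ∀ᶠ C : ℝ in atTop, ∀ k, 1 ≤ x k * C := by
    rw [Filter.eventually_all]
    intro k
    have : Filter.Tendsto (fun C : ℝ => x k * C) atTop atTop :=
      Filter.Tendsto.const_mul_atTop (hx k) Filter.tendsto_id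
    exact this.eventually_ge_atTop 1
  have hevlow : ∀ᶠ C : ℝ in atTop, S^2 ≤ C * V C := by
    filter_upwards [Filter.eventually_gt_atTop (0:ℝ), hev1] with C hC hC1
    rw [hV]
    have hne : Set.Nonempty {y : ℝ |
      ∃ (m : Fin K → ℕ) (c : (k : Fin K) → Fin (m k) → ℝ),
        (∀ k i, 0 ≤ c k i) ∧ (∑ k, ∑ i, c k i) ≤ C ∧
        (∀ k, 0 < ∑ i, F k (c k i)) ∧
        y = ∑ k, (a k)^2 / (∑ i, F k (c k i))} := ⟨_, hmem C hC hC1⟩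
    have hge : S^2 / C ≤ sInf {y : ℝ |
      ∃ (m : Fin K → ℕ) (c : (k : Fin K) → Fin (m k) → ℝ),
        (∀ k i, 0 ≤ c k i) ∧ (∑ k, ∑ i, c k i) ≤ C ∧
        (∀ k, 0 < ∑ i, F k (c k i)) ∧
        y = ∑ k, (a k)^2 / (∑ i, F k (c k i))} := by
      refine le_csInf hne ?_
      rintro y ⟨m, c, hc0, hcost, hpos, rfl⟩
      rw [div_le_iff₀ hC]
      calc S^2 ≤ C * ∑ k, (a k)^2 / (∑ i, F k (c k i)) := hlow C hC m c hc0 hcost hpos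
        _ = (∑ k, (a k)^2 / (∑ i, F k (c k i))) * C := mul_comm _ _
    calc S^2 = C * (S^2 / C) := by field_simp
      _ ≤ _ := mul_le_mul_of_nonneg_left hge hC.le
  have hevhigh : ∀ᶠ C : ℝ in atTop, C * V C ≤ g C := by
    filter_upwards [Filter.eventually_gt_atTop (0:ℝ), hev1] with C hC hC1
    have hVle : V C ≤ ∑ k, (a k)^2 / ((⌊x k * C⌋₊ : ℝ) * (cstar k / pstar k)) := by
      rw [hV]
      refine csInf_le ?_ (hmem C hC hC1)
      refine ⟨0, ?_⟩
      rintro y ⟨m, c, hc0, hcost, hpos, rfl⟩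
      exact Finset.sum_nonneg fun k _ => div_nonneg (sq_nonneg _) (hpos k).le
    calc C * V C ≤ C * ∑ k, (a k)^2 / ((⌊x k * C⌋₊ : ℝ) * (cstar k / pstar k)) :=
          mul_le_mul_of_nonneg_left hVle hC.le
      _ = g C := hgC C hC hC1
  exact tendsto_of_tendsto_of_tendsto_of_le_of_le' tendsto_const_nhds hgt hevlow hevhigh
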